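/- Every nested structure with at least one base is 𝒢-decomposable, where a structure is nested if it contains no two crossing pairings, i.e., no pairings (i,j) and (i',j') with i < i' < j < j'. -/

import Mathlib

/-!
Formalization of higher RNA structures, compositions, decomposability,
folded sequences, alignments and scores, following M. Brinkmeier,
"Structural Alignments of pseudo-knotted RNA-molecules in polynomial time".
-/

namespace RNA

/-- A (raw) RNA structure: a number of bases, a set of pairings and an
optional gap position (`none` = 0-structure, `some k` = 1-structure). -/
structure Struct where
  n : ℕ
  pairs : Finset (ℕ × ℕ)
  gap : Option ℕ
deriving DecidableEq

/-- A structural element: an unpaired base or a pairing. -/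
abbrev Elem : Type := ℕ ⊕ ℕ × ℕ

namespace Struct

/-- Base `i` is paired in `σ`. -/
def Paired (σ : Struct) (i : ℕ) : Prop := ∃ p ∈ σ.pairs, i = p.1 ∨ i = p.2

instance (σ : Struct) (i : ℕ) : Decidable (σ.Paired i) :=
  inferInstanceAs (Decidable (∃ p ∈ σ.pairs, i = p.1 ∨ i = p.2))

/-- `σ` is a well-formed structure: all pairings `(i,j)` satisfy
`1 ≤ i < j ≤ n`, distinct pairings are disjoint as two-element sets, and the
gap (if present) lies in `[0,n]`. -/
def Valid (σ : Struct) : Prop :=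
  (∀ p ∈ σ.pairs, 1 ≤ p.1 ∧ p.1 < p.2 ∧ p.2 ≤ σ.n) ∧
  (∀ p ∈ σ.pairs, ∀ q ∈ σ.pairs, p ≠ q →
    p.1 ≠ q.1 ∧ p.1 ≠ q.2 ∧ p.2 ≠ q.1 ∧ p.2 ≠ q.2) ∧
  (∀ k ∈ σ.gap, k ≤ σ.n)

/-- The unpaired bases of `σ`. -/
def unpairedBases (σ : Struct) : Finset ℕ :=
  (Finset.Icc 1 σ.n).filter (fun i => ¬ σ.Paired i)

/-- The structural elements of `σ`: unpaired bases and pairings. -/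
def elems (σ : Struct) : Finset Elem :=
  σ.unpairedBases.image Sum.inl ∪ σ.pairs.image Sum.inr

/-- The gap of `σ`, defaulting to `0`. -/
def gapD (σ : Struct) : ℕ := σ.gap.getD 0

end Struct

/-- The identity 0-structure: a single unpaired base. -/
def ident0 : Struct := ⟨1, ∅, none⟩

/-- The identity 1-structure: a single pairing with the gap between its bases. -/
def ident1 : Struct := ⟨2, {(1, 2)}, some 1⟩

/-- The empty 0-structure. -/
def empty0 : Struct := ⟨0, ∅, none⟩

/-- The empty 1-structure. -/
def empty1 : Struct := ⟨0, ∅, some 0⟩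

/-- Composition `σ ∘ᵢ τ` of `σ` along an unpaired base `i` with a
0-structure `τ`: base `i` is replaced by the `τ.n` bases of `τ`. -/
def composeBase (σ : Struct) (i : ℕ) (τ : Struct) : Struct where
  n := σ.n + τ.n - 1
  pairs :=
    σ.pairs.image (fun p =>
      ((if p.1 < i then p.1 else p.1 + τ.n - 1),
       (if p.2 < i then p.2 else p.2 + τ.n - 1)))
    ∪ τ.pairs.image (fun q => (q.1 + i - 1, q.2 + i - 1))
  gap := σ.gap.map (fun k => if k < i then k else k + τ.n - 1)

/-- Composition `σ ∘₍ᵢ,ⱼ₎ τ` of `σ` along a pairing `(i,j)` with a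
1-structure `τ`: the pairing is deleted, the first leg of `τ` replaces base
`i` and the second leg replaces base `j`. -/
def composePair (σ : Struct) (i j : ℕ) (τ : Struct) : Struct where
  n := σ.n + τ.n - 2
  pairs :=
    (σ.pairs.erase (i, j)).image (fun p =>
      ((if p.1 < i then p.1 else if p.1 < j then p.1 + τ.gapD - 1 else p.1 + τ.n - 2),
       (if p.2 < i then p.2 else if p.2 < j then p.2 + τ.gapD - 1 else p.2 + τ.n - 2)))
    ∪ τ.pairs.image (fun q =>
      ((if q.1 ≤ τ.gapD then q.1 + i - 1 else q.1 + j - 2),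
       (if q.2 ≤ τ.gapD then q.2 + i - 1 else q.2 + j - 2)))
  gap := σ.gap.map (fun k =>
    if k < i then k else if k < j then k + τ.gapD - 1 else k + τ.n - 2)

/-- The number of bases contributed by base `b` of `τ` in a simultaneous
composition substituting `ρ χ` for the structural element `χ`:
an unpaired base contributes the whole 0-structure, the left (right) end of a
pairing contributes the first (second) leg of the corresponding 1-structure. -/
def contrib (τ : Struct) (ρ : Elem → Struct) (b : ℕ) : ℕ :=
  (if τ.Paired b then 0 else (ρ (Sum.inl b)).n)
  + ∑ p ∈ τ.pairs.filter (fun p => p.1 = b), (ρ (Sum.inr p)).gapD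
  + ∑ p ∈ τ.pairs.filter (fun p => p.2 = b), ((ρ (Sum.inr p)).n - (ρ (Sum.inr p)).gapD)

/-- The position in the composed structure of the first base replacing base
`b` of `τ`. -/
def start (τ : Struct) (ρ : Elem → Struct) (b : ℕ) : ℕ :=
  1 + ∑ b' ∈ Finset.Ico 1 b, contrib τ ρ b'

/-- Simultaneous composition `τ ∘ (ρ χ₁, …, ρ χ_ι)` of `τ` with one structure
for each of its structural elements (a 0-structure for each unpaired base, a
1-structure for each pairing). -/
def composeAll (τ : Struct) (ρ : Elem → Struct) : Struct where
  n := ∑ b ∈ Finset.Icc 1 τ.n, contrib τ ρ b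
  pairs :=
    (τ.unpairedBases.biUnion (fun b => (ρ (Sum.inl b)).pairs.image
      (fun q => (q.1 + start τ ρ b - 1, q.2 + start τ ρ b - 1))))
    ∪ (τ.pairs.biUnion (fun p => (ρ (Sum.inr p)).pairs.image
      (fun q =>
        ((if q.1 ≤ (ρ (Sum.inr p)).gapD then q.1 + start τ ρ p.1 - 1
          else q.1 - (ρ (Sum.inr p)).gapD + start τ ρ p.2 - 1),
         (if q.2 ≤ (ρ (Sum.inr p)).gapD then q.2 + start τ ρ p.1 - 1
          else q.2 - (ρ (Sum.inr p)).gapD + start τ ρ p.2 - 1)))))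
  gap := τ.gap.map (fun k => ∑ b ∈ Finset.Icc 1 k, contrib τ ρ b)

/-- A structure is `Γ`-decomposable if it is an identity or a simultaneous
composition of a generator `τ ∈ Γ` with `Γ`-decomposable structures, one of
the appropriate type for each structural element of `τ`. -/
inductive Decomposable (Γ : Finset Struct) : Struct → Prop
  | isId0 : Decomposable Γ ident0
  | isId1 : Decomposable Γ ident1
  | comp (τ : Struct) (ρ : Elem → Struct) :
      τ ∈ Γ →
      (∀ i, Sum.inl i ∈ τ.elems → (ρ (Sum.inl i)).gap = none) →
      (∀ p, Sum.inr p ∈ τ.elems → (ρ (Sum.inr p)).gap ≠ none) →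
      (∀ i, Sum.inl i ∈ τ.elems → Decomposable Γ (ρ (Sum.inl i))) →
      (∀ p, Sum.inr p ∈ τ.elems → Decomposable Γ (ρ (Sum.inr p))) →
      Decomposable Γ (composeAll τ ρ)

/-! The generators of the paper. -/

def gConcat  : Struct := ⟨2, ∅, none⟩
def gLoop    : Struct := ⟨2, {(1, 2)}, none⟩
def gDisconn : Struct := ⟨2, ∅, some 1⟩
def gLembed  : Struct := ⟨1, ∅, some 1⟩
def gRembed  : Struct := ⟨1, ∅, some 0⟩
def gLconcat : Struct := ⟨3, {(2, 3)}, some 2⟩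
def gRconcat : Struct := ⟨3, {(1, 2)}, some 1⟩
def gLinsert : Struct := ⟨3, {(1, 3)}, some 2⟩
def gRinsert : Struct := ⟨3, {(1, 3)}, some 1⟩
def gLwrap   : Struct := ⟨4, {(1, 3), (2, 4)}, some 3⟩
def gRwrap   : Struct := ⟨4, {(1, 3), (2, 4)}, some 1⟩
def gNest    : Struct := ⟨4, {(1, 4), (2, 3)}, some 2⟩
def gCross   : Struct := ⟨4, {(1, 3), (2, 4)}, some 2⟩

/-- The generator set `𝒢` of the paper. -/
def calG : Finset Struct :=
  {gConcat, gLoop, gDisconn, gLembed, gRembed, gLconcat, gRconcat,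
   gLinsert, gRinsert, gLwrap, gRwrap, gNest, gCross}

/-! Folded sequences.  The blank `∘` is represented by `none : Option α`. -/

/-- A folded sequence: a structure together with a word (the letter of base
`i` is entry `i-1` of the list). -/
structure FSeq (α : Type) where
  str : Struct
  word : List α

/-- A folded sequence is well-formed if the word has exactly one letter for
each base. -/
def FSeq.WF {α : Type} (F : FSeq α) : Prop := F.word.length = F.str.n

/-- The label of base `i` (1-based) in the word `t`, blanks off the end. -/
def labAt {α : Type} (t : List (Option α)) (i : ℕ) : Option α := t.getD (i - 1) none

/-- Base `i` (1-based) of the word `t` carries a non-blank letter. -/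
def kept {α : Type} (t : List (Option α)) (i : ℕ) : Bool := (labAt t i).isSome

/-- The number of non-blank bases among `1, …, i`; this is the new index of
base `i` after removing all blanks. -/
def rank {α : Type} (t : List (Option α)) (i : ℕ) : ℕ :=
  ((Finset.Icc 1 i).filter (fun j => kept t j = true)).card

/-- The projection `π(σ,t)`: remove all bases labelled with the blank,
removing a pairing entirely if at least one of its bases is blank. -/
def proj {α : Type} (σ : Struct) (t : List (Option α)) : FSeq α where
  str :=
    { n := rank t σ.n
      pairs := (σ.pairs.filter (fun p => kept t p.1 = true ∧ kept t p.2 = true)).image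
          (fun p => (rank t p.1, rank t p.2))
      gap := σ.gap.map (rank t) }
  word := (t.take σ.n).reduceOption

/-- `(σ, t1, t2)` is a structural alignment of the folded sequences `F1` and
`F2`: projecting the two rows yields `F1` and `F2`, and each pairing of `σ`
is labelled by two letters or two blanks in each row. -/
def IsAlignment {α : Type} (F1 F2 : FSeq α) (σ : Struct)
    (t1 t2 : List (Option α)) : Prop :=
  t1.length = σ.n ∧ t2.length = σ.n ∧ proj σ t1 = F1 ∧ proj σ t2 = F2 ∧
  ∀ p ∈ σ.pairs, kept t1 p.1 = kept t1 p.2 ∧ kept t2 p.1 = kept t2 p.2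

/-- A score function: nonnegative scores for aligned bases and aligned
pairings, vanishing on exact matches. -/
structure ScoreFn (α : Type) where
  base : Option α → Option α → ℝ
  pair : Option α × Option α → Option α × Option α → ℝ
  base_nonneg : ∀ x y, 0 ≤ base x y
  pair_nonneg : ∀ u v, 0 ≤ pair u v
  base_refl : ∀ x, base x x = 0
  pair_refl : ∀ x y : α, pair (some x, some y) (some x, some y) = 0
  pair_blank : pair (none, none) (none, none) = 0

/-- The score of an alignment: the sum of the scores of its structural
elements. -/
noncomputable def alignScore {α : Type} (S : ScoreFn α) (σ : Struct)
    (t1 t2 : List (Option α)) : ℝ :=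
  (∑ i ∈ σ.unpairedBases, S.base (labAt t1 i) (labAt t2 i))
  + ∑ p ∈ σ.pairs, S.pair (labAt t1 p.1, labAt t1 p.2) (labAt t2 p.1, labAt t2 p.2)

/-- The score of a minimum alignment of `F1` and `F2`. -/
noncomputable def minScore {α : Type} (S : ScoreFn α) (F1 F2 : FSeq α) : ℝ :=
  sInf {x : ℝ | ∃ σ t1 t2, IsAlignment F1 F2 σ t1 t2 ∧ alignScore S σ t1 t2 = x}

/-- `i` is an end of some pairing in `P`. -/
def endOf (P : Finset (ℕ × ℕ)) (i : ℕ) : Prop := ∃ p ∈ P, i = p.1 ∨ i = p.2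

instance (P : Finset (ℕ × ℕ)) (i : ℕ) : Decidable (endOf P i) :=
  inferInstanceAs (Decidable (∃ p ∈ P, i = p.1 ∨ i = p.2))

/-- The number of bases in `1, …, i` which are not ends of pairings in `P`;
the new index of base `i` after removing the pairings in `P` with their
bases. -/
def rrank (P : Finset (ℕ × ℕ)) (i : ℕ) : ℕ :=
  ((Finset.Icc 1 i).filter (fun j => ¬ endOf P j)).card

/-- `σ ∖ P`: remove from `σ` all pairings in `P` together with their bases. -/
def removePairs (σ : Struct) (P : Finset (ℕ × ℕ)) : Struct where
  n := rrank P σ.n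
  pairs := (σ.pairs \ P).image (fun p => (rrank P p.1, rrank P p.2))
  gap := σ.gap.map (rrank P)

/-- An alignment is `Γ`-semi-decomposable if after removing a set of pairings
which are matched against blanks in one of the two rows, the remaining core
structure is `Γ`-decomposable. -/
def SemiDecomposable {α : Type} (Γ : Finset Struct) (σ : Struct)
    (t1 t2 : List (Option α)) : Prop :=
  ∃ P ⊆ σ.pairs,
    (∀ p ∈ P, (labAt t1 p.1 = none ∧ labAt t1 p.2 = none) ∨
              (labAt t2 p.1 = none ∧ labAt t2 p.2 = none)) ∧
    Decomposable Γ (removePairs σ P)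

/-! Restrictions of structures and folded sequences to intervals. -/

/-- Base `i` survives the restriction of `σ` to the interval `[a,b]`:
it lies in `[a,b]` and is not an end of a pairing reaching outside `[a,b]`. -/
def keptIv (σ : Struct) (a b i : ℕ) : Prop :=
  a ≤ i ∧ i ≤ b ∧
    ¬ ∃ p ∈ σ.pairs, (i = p.1 ∨ i = p.2) ∧ ¬ (a ≤ p.1 ∧ p.1 ≤ b ∧ a ≤ p.2 ∧ p.2 ≤ b)

instance (σ : Struct) (a b i : ℕ) : Decidable (keptIv σ a b i) :=
  inferInstanceAs (Decidable (_ ∧ _ ∧ ¬ ∃ p ∈ σ.pairs, _))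

/-- New index of base `i` in the restriction of `σ` to `[a,b]`. -/
def rankIv (σ : Struct) (a b i : ℕ) : ℕ :=
  ((Finset.Icc 1 i).filter (fun j => keptIv σ a b j)).card

/-- The restriction `σ[a,b]` of a structure to the interval `[a,b]`,
removing all bases outside `[a,b]` and all pairings with at least one end
outside `[a,b]` (together with their bases). -/
def Struct.restrict0 (σ : Struct) (a b : ℕ) : Struct where
  n := rankIv σ a b σ.n
  pairs := (σ.pairs.filter (fun p => a ≤ p.1 ∧ p.1 ≤ b ∧ a ≤ p.2 ∧ p.2 ≤ b)).image
      (fun p => (rankIv σ a b p.1, rankIv σ a b p.2))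
  gap := none

/-- `i` lies in the interval `[a,b]`. -/
def inIv (a b i : ℕ) : Prop := a ≤ i ∧ i ≤ b

instance (a b i : ℕ) : Decidable (inIv a b i) := inferInstanceAs (Decidable (_ ∧ _))

/-- Base `i` survives the restriction of `σ` to the pair of intervals
`[a,b]`, `[c,d]`. -/
def keptIv2 (σ : Struct) (a b c d i : ℕ) : Prop :=
  (inIv a b i ∨ inIv c d i) ∧
    ¬ ∃ p ∈ σ.pairs, (i = p.1 ∨ i = p.2) ∧
      ¬ ((inIv a b p.1 ∨ inIv c d p.1) ∧ (inIv a b p.2 ∨ inIv c d p.2))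

instance (σ : Struct) (a b c d i : ℕ) : Decidable (keptIv2 σ a b c d i) :=
  inferInstanceAs (Decidable (_ ∧ ¬ ∃ p ∈ σ.pairs, _))

/-- New index of base `i` in the restriction of `σ` to `[a,b] ; [c,d]`. -/
def rankIv2 (σ : Struct) (a b c d i : ℕ) : ℕ :=
  ((Finset.Icc 1 i).filter (fun j => keptIv2 σ a b c d j)).card

/-- The restriction `σ[a,b; c,d]` of a structure to two intervals, a
1-structure with the gap between them; pairings with at least one end outside
`[a,b] ∪ [c,d]` are removed together with their bases. -/
def Struct.restrict1 (σ : Struct) (a b c d : ℕ) : Struct where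
  n := rankIv2 σ a b c d σ.n
  pairs := (σ.pairs.filter (fun p =>
      (inIv a b p.1 ∨ inIv c d p.1) ∧ (inIv a b p.2 ∨ inIv c d p.2))).image
      (fun p => (rankIv2 σ a b c d p.1, rankIv2 σ a b c d p.2))
  gap := some (rankIv2 σ a b c d b)

/-- The restriction `(σ,s)[a,b]` of a folded sequence. -/
def FSeq.restrict0 {α : Type} [Inhabited α] (F : FSeq α) (a b : ℕ) : FSeq α where
  str := F.str.restrict0 a b
  word := ((List.range F.str.n).filter (fun idx => decide (keptIv F.str a b (idx + 1)))).map
      (fun idx => F.word.getD idx default)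

/-- The restriction `(σ,s)[a,b; c,d]` of a folded sequence. -/
def FSeq.restrict1 {α : Type} [Inhabited α] (F : FSeq α) (a b c d : ℕ) : FSeq α where
  str := F.str.restrict1 a b c d
  word := ((List.range F.str.n).filter (fun idx => decide (keptIv2 F.str a b c d (idx + 1)))).map
      (fun idx => F.word.getD idx default)

/-- The letter at base `i` of a folded sequence. -/
def FSeq.lab {α : Type} [Inhabited α] (F : FSeq α) (i : ℕ) : α := F.word.getD (i - 1) default

/-! τ-splittings. -/

/-- A `τ`-splitting of `σ`: a partition of `[1,σ.n]` into `τ.n` consecutive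
(possibly empty) intervals `I^b = [e (b-1) + 1, e b]`, respecting the gaps. -/
structure Splitting (τ σ : Struct) where
  e : ℕ → ℕ
  e_zero : e 0 = 0
  e_last : e τ.n = σ.n
  mono : Monotone e
  gap_ok : ∀ g ∈ τ.gap, ∀ k ∈ σ.gap, e g = k

namespace Splitting

variable {τ σ : Struct}

/-- Base `i` of `σ` lies in the `b`-th interval of the splitting. -/
def inBlock (sp : Splitting τ σ) (b i : ℕ) : Prop := sp.e (b - 1) < i ∧ i ≤ sp.e b

instance (sp : Splitting τ σ) (b i : ℕ) : Decidable (sp.inBlock b i) :=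
  inferInstanceAs (Decidable (_ ∧ _))

/-- The pairing `p` of `σ` is incompatible with the splitting: its two ends
lie in two different intervals whose indices do not form a pairing of `τ`. -/
def Incompat (sp : Splitting τ σ) (p : ℕ × ℕ) : Prop :=
  ∃ b ∈ Finset.Icc 1 τ.n, ∃ c ∈ Finset.Icc 1 τ.n,
    sp.inBlock b p.1 ∧ sp.inBlock c p.2 ∧ b ≠ c ∧ (b, c) ∉ τ.pairs

instance (sp : Splitting τ σ) (p : ℕ × ℕ) : Decidable (sp.Incompat p) :=
  inferInstanceAs (Decidable (∃ b ∈ Finset.Icc 1 τ.n, ∃ c ∈ Finset.Icc 1 τ.n,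
    sp.inBlock b p.1 ∧ sp.inBlock c p.2 ∧ b ≠ c ∧ (b, c) ∉ τ.pairs))

/-- The set of pairings of `σ` incompatible with the splitting. -/
def incompatSet (sp : Splitting τ σ) : Finset (ℕ × ℕ) :=
  σ.pairs.filter (fun p => sp.Incompat p)

/-- Base `i` of `σ` survives the removal of all incompatible pairings. -/
def surv (sp : Splitting τ σ) (i : ℕ) : Prop :=
  1 ≤ i ∧ i ≤ σ.n ∧ ¬ ∃ p ∈ σ.pairs, sp.Incompat p ∧ (i = p.1 ∨ i = p.2)

instance (sp : Splitting τ σ) (i : ℕ) : Decidable (sp.surv i) :=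
  inferInstanceAs (Decidable (_ ∧ _ ∧ ¬ ∃ p ∈ σ.pairs, _))

/-- The number of surviving bases among `1, …, x`. -/
def survCount (sp : Splitting τ σ) (x : ℕ) : ℕ :=
  ((Finset.Icc 1 x).filter (fun i => sp.surv i)).card

/-- The splitting is proper: after removing all incompatible pairings the
induced splitting contains no empty interval. -/
def Proper (sp : Splitting τ σ) : Prop :=
  ∀ b ∈ Finset.Icc 1 τ.n, sp.survCount (sp.e (b - 1)) < sp.survCount (sp.e b)

end Splitting

/-- The score of a minimum `Γ`-semi-decomposable alignment of `F1` and `F2`. -/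
noncomputable def minScoreDecomp {α : Type} (Γ : Finset Struct) (S : ScoreFn α)
    (F1 F2 : FSeq α) : ℝ :=
  sInf {x : ℝ | ∃ σ t1 t2, IsAlignment F1 F2 σ t1 t2 ∧
    SemiDecomposable Γ σ t1 t2 ∧ alignScore S σ t1 t2 = x}


/-- A structure is nested if it contains no two crossing pairings, i.e. no
pairings `(i,j)` and `(i',j')` with `i < i' < j < j'`. -/
def Struct.Nested (σ : Struct) : Prop :=
  ¬ ∃ p ∈ σ.pairs, ∃ q ∈ σ.pairs, p.1 < q.1 ∧ q.1 < p.2 ∧ p.2 < q.2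
def shiftP (P : Finset (ℕ×ℕ)) (m : ℕ) : Finset (ℕ×ℕ) := P.image (fun p => (p.1 + m, p.2 + m))

lemma compConcat (a b : Struct) :
    composeAll gConcat (fun e => if e = Sum.inl 1 then a else b) =
    ⟨a.n + b.n, a.pairs ∪ shiftP b.pairs a.n, none⟩ := by
  set ρ : Elem → Struct := fun e => if e = Sum.inl 1 then a else b with hρ
  have hc : ∀ x, contrib gConcat ρ x = if x = 1 then a.n else b.n := by
    intro x
    by_cases h : x = 1 <;> simp [contrib, gConcat, Struct.Paired, hρ, h]
  have hs1 : start gConcat ρ 1 = 1 := by simp [start]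
  have hs2 : start gConcat ρ 2 = 1 + a.n := by
    have h : (Finset.Ico 1 2 : Finset ℕ) = {1} := by decide
    simp [start, h, hc]
  have h1 : (Finset.Icc 1 2 : Finset ℕ) = {1,2} := by decide
  have h2 : gConcat.unpairedBases = {1,2} := by decide
  have hgp : gConcat.pairs = ∅ := rfl
  have hgg : gConcat.gap = none := rfl
  have e1 : (fun q : ℕ×ℕ => (q.1 + 1 - 1, q.2 + 1 - 1)) = fun q => q := by
    funext q; simp
  have e2 : (fun q : ℕ×ℕ => (q.1 + (1 + a.n) - 1, q.2 + (1 + a.n) - 1))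
      = fun q : ℕ×ℕ => (q.1 + a.n, q.2 + a.n) := by
    funext q; simp only [Prod.mk.injEq]; omega
  simp only [composeAll, Struct.mk.injEq]
  have hgn : gConcat.n = 2 := rfl
  refine ⟨?_, ?_, ?_⟩
  · rw [hgn, h1, Finset.sum_insert (by decide), Finset.sum_singleton, hc, hc]; simp
  · rw [h2, hgp, Finset.biUnion_insert, Finset.singleton_biUnion, hs1, hs2, e1, e2]
    simp [hρ, shiftP]
  · rw [hgg]; rfl
lemma compLoop (t : Struct) (hg : t.gapD ≤ t.n) :
    composeAll gLoop (fun _ => t) = ⟨t.n, t.pairs, none⟩ := by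
  set ρ : Elem → Struct := (fun _ => t : Elem → Struct) with hρ
  have hc1 : contrib gLoop ρ 1 = t.gapD := by
    simp [contrib, gLoop, Struct.Paired, Finset.filter_singleton, hρ]
  have hc2 : contrib gLoop ρ 2 = t.n - t.gapD := by
    simp [contrib, gLoop, Struct.Paired, Finset.filter_singleton, hρ]
  have hs1 : start gLoop ρ 1 = 1 := by simp [start]
  have hs2 : start gLoop ρ 2 = 1 + t.gapD := by
    have h : (Finset.Ico 1 2 : Finset ℕ) = {1} := by decide
    simp [start, h, hc1]
  have h1 : (Finset.Icc 1 2 : Finset ℕ) = {1,2} := by decide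
  have h2 : gLoop.unpairedBases = ∅ := by decide
  have hgp : gLoop.pairs = {(1,2)} := rfl
  simp only [composeAll, Struct.mk.injEq]
  have hgn : gLoop.n = 2 := rfl
  refine ⟨?_, ?_, ?_⟩
  · rw [hgn, h1, Finset.sum_insert (by decide), Finset.sum_singleton, hc1, hc2]; omega
  · rw [h2, hgp, Finset.singleton_biUnion]
    simp only [hs1, hs2]; simp only [Finset.biUnion_empty, Finset.empty_union, hρ]
    have key : ∀ x : ℕ, (if x ≤ t.gapD then x + 1 - 1 else x - t.gapD + (1 + t.gapD) - 1) = x := by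
      intro x; split <;> omega
    simp only [key, Prod.mk.eta, Finset.image_id']
  · rfl
lemma compLembed (a : Struct) :
    composeAll gLembed (fun _ => a) = ⟨a.n, a.pairs, some a.n⟩ := by
  set ρ : Elem → Struct := (fun _ => a : Elem → Struct) with hρ
  have hc1 : contrib gLembed ρ 1 = a.n := by
    simp [contrib, gLembed, Struct.Paired, hρ]
  have hs1 : start gLembed ρ 1 = 1 := by simp [start]
  have h1 : (Finset.Icc 1 1 : Finset ℕ) = {1} := by decide
  have h2 : gLembed.unpairedBases = {1} := by decide
  have hgp : gLembed.pairs = ∅ := rfl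
  simp only [composeAll, Struct.mk.injEq]
  have hgn : gLembed.n = 1 := rfl
  refine ⟨?_, ?_, ?_⟩
  · rw [hgn, h1, Finset.sum_singleton, hc1]
  · rw [h2, hgp, Finset.singleton_biUnion, Finset.biUnion_empty, Finset.union_empty]
    simp only [hs1]; simp only [hρ]
    have key : ∀ x : ℕ, x + 1 - 1 = x := by omega
    simp only [key, Prod.mk.eta, Finset.image_id']
  · show Option.map _ (some 1) = some a.n
    simp only [Option.map_some, Option.some.injEq, h1, Finset.sum_singleton, hc1]

lemma compRembed (a : Struct) :
    composeAll gRembed (fun _ => a) = ⟨a.n, a.pairs, some 0⟩ := by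
  set ρ : Elem → Struct := (fun _ => a : Elem → Struct) with hρ
  have hc1 : contrib gRembed ρ 1 = a.n := by
    simp [contrib, gRembed, Struct.Paired, hρ]
  have hs1 : start gRembed ρ 1 = 1 := by simp [start]
  have h1 : (Finset.Icc 1 1 : Finset ℕ) = {1} := by decide
  have h2 : gRembed.unpairedBases = {1} := by decide
  have hgp : gRembed.pairs = ∅ := rfl
  simp only [composeAll, Struct.mk.injEq]
  have hgn : gRembed.n = 1 := rfl
  refine ⟨?_, ?_, ?_⟩
  · rw [hgn, h1, Finset.sum_singleton, hc1]
  · rw [h2, hgp, Finset.singleton_biUnion, Finset.biUnion_empty, Finset.union_empty]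
    simp only [hs1]; simp only [hρ]
    have key : ∀ x : ℕ, x + 1 - 1 = x := by omega
    simp only [key, Prod.mk.eta, Finset.image_id']
  · show Option.map _ (some 0) = some 0
    simp
lemma compLconcat (a t : Struct) (hg : t.gapD ≤ t.n) :
    composeAll gLconcat (fun e => if e = Sum.inl 1 then a else t) =
    ⟨a.n + t.n, a.pairs ∪ shiftP t.pairs a.n, some (a.n + t.gapD)⟩ := by
  set ρ : Elem → Struct := fun e => if e = Sum.inl 1 then a else t with hρ
  have hc1 : contrib gLconcat ρ 1 = a.n := by
    simp [contrib, gLconcat, Struct.Paired, Finset.filter_singleton, hρ]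
  have hc2 : contrib gLconcat ρ 2 = t.gapD := by
    simp [contrib, gLconcat, Struct.Paired, Finset.filter_singleton, hρ]
  have hc3 : contrib gLconcat ρ 3 = t.n - t.gapD := by
    simp [contrib, gLconcat, Struct.Paired, Finset.filter_singleton, hρ]
  have hs1 : start gLconcat ρ 1 = 1 := by simp [start]
  have hs2 : start gLconcat ρ 2 = 1 + a.n := by
    have h : (Finset.Ico 1 2 : Finset ℕ) = {1} := by decide
    simp [start, h, hc1]
  have hs3 : start gLconcat ρ 3 = 1 + (a.n + t.gapD) := by
    have h : (Finset.Ico 1 3 : Finset ℕ) = {1, 2} := by decide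
    rw [start, h, Finset.sum_insert (by decide), Finset.sum_singleton, hc1, hc2]
    all_goals omega
  have h13 : (Finset.Icc 1 3 : Finset ℕ) = {1, 2, 3} := by decide
  have h12 : (Finset.Icc 1 2 : Finset ℕ) = {1, 2} := by decide
  have h2 : gLconcat.unpairedBases = {1} := by decide
  have hgp : gLconcat.pairs = {(2, 3)} := rfl
  simp only [composeAll, Struct.mk.injEq]
  have hgn : gLconcat.n = 3 := rfl
  refine ⟨?_, ?_, ?_⟩
  · rw [hgn, h13, Finset.sum_insert (by decide), Finset.sum_insert (by decide),
      Finset.sum_singleton, hc1, hc2, hc3]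
    all_goals omega
  · rw [h2, hgp, Finset.singleton_biUnion, Finset.singleton_biUnion]
    have hra : ρ (Sum.inl 1) = a := by simp [hρ]
    have hrt : ρ (Sum.inr (2,3)) = t := by simp [hρ]
    simp only [hra, hrt, hs1, hs2, hs3]
    have k0 : ∀ x : ℕ, x + 1 - 1 = x := by omega
    have key : ∀ x : ℕ,
        (if x ≤ t.gapD then x + (1 + a.n) - 1 else x - t.gapD + (1 + (a.n + t.gapD)) - 1)
        = x + a.n := by intro x; split <;> omega
    simp only [k0, key, Prod.mk.eta, Finset.image_id', shiftP]
  · show Option.map _ (some 2) = some (a.n + t.gapD)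
    simp only [Option.map_some, Option.some.injEq, h12, Finset.sum_insert (by decide : (1:ℕ) ∉ {2}),
      Finset.sum_singleton, hc1, hc2]

lemma compRconcat (t a : Struct) (hg : t.gapD ≤ t.n) :
    composeAll gRconcat (fun e => if e = Sum.inl 3 then a else t) =
    ⟨t.n + a.n, shiftP a.pairs t.n ∪ t.pairs, some t.gapD⟩ := by
  set ρ : Elem → Struct := fun e => if e = Sum.inl 3 then a else t with hρ
  have hc1 : contrib gRconcat ρ 1 = t.gapD := by
    simp [contrib, gRconcat, Struct.Paired, Finset.filter_singleton, hρ]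
  have hc2 : contrib gRconcat ρ 2 = t.n - t.gapD := by
    simp [contrib, gRconcat, Struct.Paired, Finset.filter_singleton, hρ]
  have hc3 : contrib gRconcat ρ 3 = a.n := by
    simp [contrib, gRconcat, Struct.Paired, Finset.filter_singleton, hρ]
  have hs1 : start gRconcat ρ 1 = 1 := by simp [start]
  have hs2 : start gRconcat ρ 2 = 1 + t.gapD := by
    have h : (Finset.Ico 1 2 : Finset ℕ) = {1} := by decide
    simp [start, h, hc1]
  have hs3 : start gRconcat ρ 3 = 1 + t.n := by
    have h : (Finset.Ico 1 3 : Finset ℕ) = {1, 2} := by decide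
    rw [start, h, Finset.sum_insert (by decide), Finset.sum_singleton, hc1, hc2]
    all_goals omega
  have h13 : (Finset.Icc 1 3 : Finset ℕ) = {1, 2, 3} := by decide
  have h11 : (Finset.Icc 1 1 : Finset ℕ) = {1} := by decide
  have h2 : gRconcat.unpairedBases = {3} := by decide
  have hgp : gRconcat.pairs = {(1, 2)} := rfl
  simp only [composeAll, Struct.mk.injEq]
  have hgn : gRconcat.n = 3 := rfl
  refine ⟨?_, ?_, ?_⟩
  · rw [hgn, h13, Finset.sum_insert (by decide), Finset.sum_insert (by decide),
      Finset.sum_singleton, hc1, hc2, hc3]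
    all_goals omega
  · rw [h2, hgp, Finset.singleton_biUnion, Finset.singleton_biUnion]
    have hra : ρ (Sum.inl 3) = a := by simp [hρ]
    have hrt : ρ (Sum.inr (1,2)) = t := by simp [hρ]
    simp only [hra, hrt, hs1, hs2, hs3]
    have k0 : ∀ x : ℕ, x + (1 + t.n) - 1 = x + t.n := by omega
    have key : ∀ x : ℕ,
        (if x ≤ t.gapD then x + 1 - 1 else x - t.gapD + (1 + t.gapD) - 1) = x := by
      intro x; split <;> omega
    simp only [k0, key, Prod.mk.eta, Finset.image_id', shiftP]
  · show Option.map _ (some 1) = some t.gapD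
    simp only [Option.map_some, Option.some.injEq, h11, Finset.sum_singleton, hc1]

lemma compNest (t : Struct) (hg : t.gapD ≤ t.n) :
    composeAll gNest (fun e => if e = Sum.inr (1,4) then ident1 else t) =
    ⟨t.n + 2, {(1, t.n + 2)} ∪ shiftP t.pairs 1, some (t.gapD + 1)⟩ := by
  set ρ : Elem → Struct := fun e => if e = Sum.inr (1,4) then ident1 else t with hρ
  have hP : gNest.pairs = {(1,4),(2,3)} := rfl
  have hc1 : contrib gNest ρ 1 = 1 := by
    simp [contrib, gNest, Struct.Paired, Finset.filter_insert, Finset.filter_singleton, hρ, ident1,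
      Struct.gapD]
  have hc2 : contrib gNest ρ 2 = t.gapD := by
    simp [contrib, gNest, Struct.Paired, Finset.filter_insert, Finset.filter_singleton, hρ]
  have hc3 : contrib gNest ρ 3 = t.n - t.gapD := by
    simp [contrib, gNest, Struct.Paired, Finset.filter_insert, Finset.filter_singleton, hρ]
  have hc4 : contrib gNest ρ 4 = 1 := by
    simp [contrib, gNest, Struct.Paired, Finset.filter_insert, Finset.filter_singleton, hρ, ident1,
      Struct.gapD]
  have hs1 : start gNest ρ 1 = 1 := by simp [start]
  have hs2 : start gNest ρ 2 = 2 := by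
    have h : (Finset.Ico 1 2 : Finset ℕ) = {1} := by decide
    simp [start, h, hc1]
  have hs3 : start gNest ρ 3 = 2 + t.gapD := by
    have h : (Finset.Ico 1 3 : Finset ℕ) = {1, 2} := by decide
    rw [start, h, Finset.sum_insert (by decide), Finset.sum_singleton, hc1, hc2]
    all_goals omega
  have hs4 : start gNest ρ 4 = 2 + t.n := by
    have h : (Finset.Ico 1 4 : Finset ℕ) = {1, 2, 3} := by decide
    rw [start, h, Finset.sum_insert (by decide), Finset.sum_insert (by decide),
      Finset.sum_singleton, hc1, hc2, hc3]
    all_goals omega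
  have h14 : (Finset.Icc 1 4 : Finset ℕ) = {1, 2, 3, 4} := by decide
  have h12 : (Finset.Icc 1 2 : Finset ℕ) = {1, 2} := by decide
  have h2 : gNest.unpairedBases = ∅ := by decide
  simp only [composeAll, Struct.mk.injEq]
  have hgn : gNest.n = 4 := rfl
  refine ⟨?_, ?_, ?_⟩
  · rw [hgn, h14, Finset.sum_insert (by decide), Finset.sum_insert (by decide),
      Finset.sum_insert (by decide), Finset.sum_singleton, hc1, hc2, hc3, hc4]
    all_goals omega
  · rw [h2, hP, Finset.biUnion_empty, Finset.empty_union, Finset.biUnion_insert,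
      Finset.singleton_biUnion]
    have hri : ρ (Sum.inr (1,4)) = ident1 := by simp [hρ]
    have hrt : ρ (Sum.inr (2,3)) = t := by simp [hρ]
    simp only [hri, hrt, hs1, hs2, hs3, hs4]
    have hi1 : ident1.pairs = {(1,2)} := rfl
    have hig : ident1.gapD = 1 := rfl
    have key : ∀ x : ℕ, (if x ≤ t.gapD then x + 2 - 1 else x - t.gapD + (2 + t.gapD) - 1)
        = x + 1 := by intro x; split <;> omega
    rw [hi1, hig, Finset.image_singleton]
    simp only [key, shiftP]
    norm_num
    rw [Nat.add_comm 2 t.n]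
  · show Option.map _ (some 2) = some (t.gapD + 1)
    simp only [Option.map_some, Option.some.injEq, h12, Finset.sum_insert (by decide : (1:ℕ) ∉ {2}),
      Finset.sum_singleton, hc1, hc2]
    omega
lemma Struct.ext' {s t : Struct} (h1 : s.n = t.n) (h2 : s.pairs = t.pairs)
    (h3 : s.gap = t.gap) : s = t := by
  cases s; cases t; simp_all

lemma valid_mk_subset {σ : Struct} (hv : σ.Valid) {P : Finset (ℕ×ℕ)} (hP : P ⊆ σ.pairs)
    {n' : ℕ} (hn : ∀ p ∈ P, p.2 ≤ n') {g : Option ℕ} (hg : ∀ k ∈ g, k ≤ n') :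
    Struct.Valid ⟨n', P, g⟩ := by
  obtain ⟨h1, h2, h3⟩ := hv
  exact ⟨fun p hp => ⟨(h1 p (hP hp)).1, (h1 p (hP hp)).2.1, hn p hp⟩,
    fun p hp q hq hne => h2 p (hP hp) q (hP hq) hne, hg⟩

lemma nested_mk_subset {σ : Struct} (hn : σ.Nested) {P : Finset (ℕ×ℕ)} (hP : P ⊆ σ.pairs)
    {n' : ℕ} {g : Option ℕ} : Struct.Nested ⟨n', P, g⟩ := by
  rintro ⟨p, hp, q, hq, h⟩
  exact hn ⟨p, hP hp, q, hP hq, h⟩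

lemma valid_mk_image {σ : Struct} (hv : σ.Valid) {P : Finset (ℕ×ℕ)} (hP : P ⊆ σ.pairs)
    {m n' : ℕ} (hm : ∀ p ∈ P, m < p.1) (hn : ∀ p ∈ P, p.2 ≤ m + n')
    {g : Option ℕ} (hg : ∀ k ∈ g, k ≤ n') :
    Struct.Valid ⟨n', P.image (fun p => (p.1 - m, p.2 - m)), g⟩ := by
  obtain ⟨h1, h2, h3⟩ := hv
  refine ⟨?_, ?_, hg⟩
  · rintro p hp
    simp only [Finset.mem_image] at hp
    obtain ⟨q, hq, rfl⟩ := hp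
    have := h1 q (hP hq); have := hm q hq; have := hn q hq
    dsimp only
    refine ⟨by omega, by omega, by omega⟩
  · rintro p hp q hq hne
    simp only [Finset.mem_image] at hp hq
    obtain ⟨p', hp', rfl⟩ := hp
    obtain ⟨q', hq', rfl⟩ := hq
    have hpq : p' ≠ q' := by rintro rfl; exact hne rfl
    have hd := h2 p' (hP hp') q' (hP hq') hpq
    have v1 := h1 p' (hP hp'); have v2 := h1 q' (hP hq')
    have m1 := hm p' hp'; have m2 := hm q' hq'
    simp only [ne_eq]
    refine ⟨by omega, by omega, by omega, by omega⟩

lemma nested_mk_image {σ : Struct} (hv : σ.Valid) (hnest : σ.Nested)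
    {P : Finset (ℕ×ℕ)} (hP : P ⊆ σ.pairs) {m n' : ℕ} (hm : ∀ p ∈ P, m < p.1)
    {g : Option ℕ} : Struct.Nested ⟨n', P.image (fun p => (p.1 - m, p.2 - m)), g⟩ := by
  rintro ⟨p, hp, q, hq, hlt1, hlt2, hlt3⟩
  simp only [Finset.mem_image] at hp hq
  obtain ⟨p', hp', rfl⟩ := hp
  obtain ⟨q', hq', rfl⟩ := hq
  have v1 := hv.1 p' (hP hp'); have v2 := hv.1 q' (hP hq')
  have m1 := hm p' hp'; have m2 := hm q' hq'
  dsimp only at hlt1 hlt2 hlt3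
  exact hnest ⟨p', hP hp', q', hP hq', by omega, by omega, by omega⟩

lemma shift_sub_cancel {Q : Finset (ℕ×ℕ)} {m : ℕ} (h : ∀ p ∈ Q, m < p.1 ∧ m < p.2) :
    shiftP (Q.image (fun p => (p.1 - m, p.2 - m))) m = Q := by
  rw [shiftP, Finset.image_image]
  have : ∀ p ∈ Q, ((fun p : ℕ×ℕ => (p.1 + m, p.2 + m)) ∘ fun p : ℕ×ℕ => (p.1 - m, p.2 - m)) p
      = id p := by
    intro p hp
    have := h p hp
    obtain ⟨h1, h2⟩ := h p hp
    show (p.1 - m + m, p.2 - m + m) = p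
    rw [Prod.ext_iff]
    constructor <;> dsimp only <;> omega
  rw [Finset.image_congr this, Finset.image_id]

lemma pairs_split {σ : Struct} (hv : σ.Valid) {m : ℕ}
    (hcr : ¬ ∃ p ∈ σ.pairs, p.1 ≤ m ∧ m < p.2) :
    σ.pairs = σ.pairs.filter (fun p => p.2 ≤ m) ∪
      shiftP ((σ.pairs.filter (fun p => m < p.1)).image (fun p => (p.1 - m, p.2 - m))) m := by
  rw [shift_sub_cancel (by
    intro p hp
    simp only [Finset.mem_filter] at hp
    have := hv.1 p hp.1
    exact ⟨hp.2, by omega⟩)]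
  ext p
  simp only [Finset.mem_union, Finset.mem_filter]
  constructor
  · intro hp
    by_cases h : p.2 ≤ m
    · exact Or.inl ⟨hp, h⟩
    · refine Or.inr ⟨hp, ?_⟩
      by_contra hm
      exact hcr ⟨p, hp, by omega, by omega⟩
  · rintro (⟨hp, _⟩ | ⟨hp, _⟩) <;> exact hp
lemma dec_split0 {σ : Struct} (hv : σ.Valid) (hg : σ.gap = none)
    {m : ℕ} (hm1 : 1 ≤ m) (hm2 : m < σ.n)
    (hcr : ¬ ∃ p ∈ σ.pairs, p.1 ≤ m ∧ m < p.2)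
    (dl : Decomposable calG ⟨m, σ.pairs.filter (fun p => p.2 ≤ m), none⟩)
    (dr : Decomposable calG ⟨σ.n - m,
      (σ.pairs.filter (fun p => m < p.1)).image (fun p => (p.1 - m, p.2 - m)), none⟩) :
    Decomposable calG σ := by
  set a : Struct := ⟨m, σ.pairs.filter (fun p => p.2 ≤ m), none⟩ with ha
  set b : Struct := ⟨σ.n - m,
    (σ.pairs.filter (fun p => m < p.1)).image (fun p => (p.1 - m, p.2 - m)), none⟩ with hb
  set ρ : Elem → Struct := fun e => if e = Sum.inl 1 then a else b with hρ
  have hσ : σ = composeAll gConcat ρ := by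
    rw [compConcat a b]
    refine Struct.ext' ?_ ?_ ?_
    · show σ.n = m + (σ.n - m); omega
    · exact pairs_split hv hcr
    · rw [hg]
  rw [hσ]
  have hel : gConcat.elems = {Sum.inl 1, Sum.inl 2} := by decide
  refine Decomposable.comp gConcat ρ (by decide) ?_ ?_ ?_ ?_
  · intro i hi
    rw [hel] at hi
    simp only [Finset.mem_insert, Finset.mem_singleton, Sum.inl.injEq] at hi
    rcases hi with rfl | rfl <;> simp [hρ, ha, hb]
  · intro p hp; rw [hel] at hp; simp at hp
  · intro i hi
    rw [hel] at hi
    simp only [Finset.mem_insert, Finset.mem_singleton, Sum.inl.injEq] at hi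
    rcases hi with rfl | rfl <;> simp only [hρ, if_pos rfl, reduceIte] <;> first
      | exact dl | exact dr
  · intro p hp; rw [hel] at hp; simp at hp

lemma dec_loop {σ : Struct} (hv : σ.Valid) (hg : σ.gap = none) (hn2 : 2 ≤ σ.n)
    (d : Decomposable calG ⟨σ.n, σ.pairs, some 1⟩) :
    Decomposable calG σ := by
  set t : Struct := ⟨σ.n, σ.pairs, some 1⟩ with ht
  set ρ : Elem → Struct := (fun _ => t : Elem → Struct) with hρ
  have hgd : t.gapD = 1 := rfl
  have hσ : σ = composeAll gLoop ρ := by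
    rw [compLoop t (by rw [hgd]; show 1 ≤ σ.n; omega)]
    exact Struct.ext' rfl rfl hg
  rw [hσ]
  have hel : gLoop.elems = {Sum.inr (1,2)} := by decide
  refine Decomposable.comp gLoop ρ (by decide) ?_ ?_ ?_ ?_
  · intro i hi; rw [hel] at hi; simp at hi
  · intro p hp; simp [hρ, ht]
  · intro i hi; rw [hel] at hi; simp at hi
  · intro p hp; exact d

lemma dec_lembed {σ : Struct} (hg : σ.gap = some σ.n)
    (d : Decomposable calG ⟨σ.n, σ.pairs, none⟩) :
    Decomposable calG σ := by
  set a : Struct := ⟨σ.n, σ.pairs, none⟩ with ha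
  set ρ : Elem → Struct := (fun _ => a : Elem → Struct) with hρ
  have hσ : σ = composeAll gLembed ρ := by
    rw [compLembed a]
    exact Struct.ext' rfl rfl hg
  rw [hσ]
  have hel : gLembed.elems = {Sum.inl 1} := by decide
  refine Decomposable.comp gLembed ρ (by decide) ?_ ?_ ?_ ?_
  · intro i hi; simp [hρ, ha]
  · intro p hp; rw [hel] at hp; simp at hp
  · intro i hi; exact d
  · intro p hp; rw [hel] at hp; simp at hp

lemma dec_rembed {σ : Struct} (hg : σ.gap = some 0)
    (d : Decomposable calG ⟨σ.n, σ.pairs, none⟩) :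
    Decomposable calG σ := by
  set a : Struct := ⟨σ.n, σ.pairs, none⟩ with ha
  set ρ : Elem → Struct := (fun _ => a : Elem → Struct) with hρ
  have hσ : σ = composeAll gRembed ρ := by
    rw [compRembed a]
    exact Struct.ext' rfl rfl hg
  rw [hσ]
  have hel : gRembed.elems = {Sum.inl 1} := by decide
  refine Decomposable.comp gRembed ρ (by decide) ?_ ?_ ?_ ?_
  · intro i hi; simp [hρ, ha]
  · intro p hp; rw [hel] at hp; simp at hp
  · intro i hi; exact d
  · intro p hp; rw [hel] at hp; simp at hp

lemma dec_split1l {σ : Struct} (hv : σ.Valid) {k : ℕ} (hg : σ.gap = some k)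
    {m : ℕ} (hm1 : 1 ≤ m) (hm2 : m < σ.n) (hmk : m ≤ k) (hkn : k ≤ σ.n)
    (hcr : ¬ ∃ p ∈ σ.pairs, p.1 ≤ m ∧ m < p.2)
    (dl : Decomposable calG ⟨m, σ.pairs.filter (fun p => p.2 ≤ m), none⟩)
    (dr : Decomposable calG ⟨σ.n - m,
      (σ.pairs.filter (fun p => m < p.1)).image (fun p => (p.1 - m, p.2 - m)), some (k - m)⟩) :
    Decomposable calG σ := by
  set a : Struct := ⟨m, σ.pairs.filter (fun p => p.2 ≤ m), none⟩ with ha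
  set t : Struct := ⟨σ.n - m,
    (σ.pairs.filter (fun p => m < p.1)).image (fun p => (p.1 - m, p.2 - m)), some (k - m)⟩ with ht
  set ρ : Elem → Struct := fun e => if e = Sum.inl 1 then a else t with hρ
  have hgd : t.gapD = k - m := rfl
  have hσ : σ = composeAll gLconcat ρ := by
    rw [compLconcat a t (by rw [hgd]; show k - m ≤ σ.n - m; omega)]
    refine Struct.ext' ?_ ?_ ?_
    · show σ.n = m + (σ.n - m); omega
    · exact pairs_split hv hcr
    · rw [hg]; show some k = some (m + (k - m)); congr 1; omega
  rw [hσ]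
  have hel : gLconcat.elems = {Sum.inl 1, Sum.inr (2,3)} := by decide
  refine Decomposable.comp gLconcat ρ (by decide) ?_ ?_ ?_ ?_
  · intro i hi
    rw [hel] at hi
    simp only [Finset.mem_insert, Finset.mem_singleton, Sum.inl.injEq, reduceCtorEq,
      or_false] at hi
    subst hi; simp [hρ, ha]
  · intro p hp
    rw [hel] at hp
    simp only [Finset.mem_insert, Finset.mem_singleton, Sum.inr.injEq, reduceCtorEq,
      false_or] at hp
    subst hp; simp [hρ, ht]
  · intro i hi
    rw [hel] at hi
    simp only [Finset.mem_insert, Finset.mem_singleton, Sum.inl.injEq, reduceCtorEq,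
      or_false] at hi
    subst hi; simpa only [hρ, if_pos rfl] using dl
  · intro p hp
    rw [hel] at hp
    simp only [Finset.mem_insert, Finset.mem_singleton, Sum.inr.injEq, reduceCtorEq,
      false_or] at hp
    subst hp; simpa [hρ] using dr

lemma dec_split1r {σ : Struct} (hv : σ.Valid) {k : ℕ} (hg : σ.gap = some k)
    {m : ℕ} (hm1 : 1 ≤ m) (hm2 : m < σ.n) (hmk : k ≤ m)
    (hcr : ¬ ∃ p ∈ σ.pairs, p.1 ≤ m ∧ m < p.2)
    (dl : Decomposable calG ⟨m, σ.pairs.filter (fun p => p.2 ≤ m), some k⟩)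
    (dr : Decomposable calG ⟨σ.n - m,
      (σ.pairs.filter (fun p => m < p.1)).image (fun p => (p.1 - m, p.2 - m)), none⟩) :
    Decomposable calG σ := by
  set t : Struct := ⟨m, σ.pairs.filter (fun p => p.2 ≤ m), some k⟩ with ht
  set a : Struct := ⟨σ.n - m,
    (σ.pairs.filter (fun p => m < p.1)).image (fun p => (p.1 - m, p.2 - m)), none⟩ with ha
  set ρ : Elem → Struct := fun e => if e = Sum.inl 3 then a else t with hρ
  have hgd : t.gapD = k := rfl
  have hσ : σ = composeAll gRconcat ρ := by
    rw [compRconcat t a (by rw [hgd]; show k ≤ m; omega)]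
    refine Struct.ext' ?_ ?_ ?_
    · show σ.n = m + (σ.n - m); omega
    · show σ.pairs = shiftP _ m ∪ _
      rw [Finset.union_comm]
      exact pairs_split hv hcr
    · rw [hg]; rfl
  rw [hσ]
  have hel : gRconcat.elems = {Sum.inl 3, Sum.inr (1,2)} := by decide
  refine Decomposable.comp gRconcat ρ (by decide) ?_ ?_ ?_ ?_
  · intro i hi
    rw [hel] at hi
    simp only [Finset.mem_insert, Finset.mem_singleton, Sum.inl.injEq, reduceCtorEq,
      or_false] at hi
    subst hi; simp [hρ, ha]
  · intro p hp
    rw [hel] at hp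
    simp only [Finset.mem_insert, Finset.mem_singleton, Sum.inr.injEq, reduceCtorEq,
      false_or] at hp
    subst hp; simp [hρ, ht]
  · intro i hi
    rw [hel] at hi
    simp only [Finset.mem_insert, Finset.mem_singleton, Sum.inl.injEq, reduceCtorEq,
      or_false] at hi
    subst hi; simpa only [hρ, if_pos rfl] using dr
  · intro p hp
    rw [hel] at hp
    simp only [Finset.mem_insert, Finset.mem_singleton, Sum.inr.injEq, reduceCtorEq,
      false_or] at hp
    subst hp; simpa [hρ] using dl
lemma erase_bounds {σ : Struct} (hv : σ.Valid) (hp : (1, σ.n) ∈ σ.pairs) :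
    ∀ p ∈ σ.pairs.erase (1, σ.n), 1 < p.1 ∧ p.2 < σ.n := by
  intro p hpe
  have hpne := Finset.ne_of_mem_erase hpe
  have hpm := Finset.mem_of_mem_erase hpe
  have hd := hv.2.1 p hpm (1, σ.n) hp hpne
  have hb := hv.1 p hpm
  have d1 : p.1 ≠ 1 := hd.1
  have d4 : p.2 ≠ σ.n := hd.2.2.2
  have hbn := hv.1 (1, σ.n) hp
  have hn2 : (1:ℕ) < σ.n := hbn.2.1
  constructor <;> omega

lemma dec_nest {σ : Struct} (hv : σ.Valid) {k : ℕ} (hg : σ.gap = some k)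
    (hp : (1, σ.n) ∈ σ.pairs) (hk1 : 1 ≤ k) (hkn : k < σ.n) (hn3 : 3 ≤ σ.n)
    (d : Decomposable calG ⟨σ.n - 2,
      (σ.pairs.erase (1, σ.n)).image (fun p => (p.1 - 1, p.2 - 1)), some (k - 1)⟩) :
    Decomposable calG σ := by
  set t : Struct := ⟨σ.n - 2,
    (σ.pairs.erase (1, σ.n)).image (fun p => (p.1 - 1, p.2 - 1)), some (k - 1)⟩ with ht
  set ρ : Elem → Struct := fun e => if e = Sum.inr (1,4) then ident1 else t with hρ
  have hgd : t.gapD = k - 1 := rfl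
  have htn : t.n = σ.n - 2 := rfl
  have hσ : σ = composeAll gNest ρ := by
    rw [compNest t (by rw [hgd, htn]; omega)]
    refine Struct.ext' ?_ ?_ ?_
    · show σ.n = σ.n - 2 + 2; omega
    · show σ.pairs = {(1, t.n + 2)} ∪ shiftP t.pairs 1
      have h2 : t.n + 2 = σ.n := by rw [htn]; omega
      rw [h2]
      have h3 : shiftP t.pairs 1 = σ.pairs.erase (1, σ.n) := by
        apply shift_sub_cancel
        intro p hpe
        have := erase_bounds hv hp p hpe
        have hb := hv.1 p (Finset.mem_of_mem_erase hpe)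
        omega
      rw [h3, ← Finset.insert_eq, Finset.insert_erase hp]
    · rw [hg]; show some k = some (t.gapD + 1); rw [hgd]; congr 1; omega
  rw [hσ]
  have hel : gNest.elems = {Sum.inr (1,4), Sum.inr (2,3)} := by decide
  refine Decomposable.comp gNest ρ (by decide) ?_ ?_ ?_ ?_
  · intro i hi; rw [hel] at hi; simp at hi
  · intro p hp'
    rw [hel] at hp'
    simp only [Finset.mem_insert, Finset.mem_singleton, Sum.inr.injEq] at hp'
    rcases hp' with rfl | rfl
    · simp [hρ, ident1]
    · simp [hρ, ht]
  · intro i hi; rw [hel] at hi; simp at hi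
  · intro p hp'
    rw [hel] at hp'
    simp only [Finset.mem_insert, Finset.mem_singleton, Sum.inr.injEq] at hp'
    rcases hp' with rfl | rfl
    · simpa only [hρ, if_pos rfl] using Decomposable.isId1
    · simpa [hρ] using d

lemma valid_left {σ : Struct} (hv : σ.Valid) {m : ℕ} {g : Option ℕ}
    (hgc : ∀ x ∈ g, x ≤ m) :
    Struct.Valid ⟨m, σ.pairs.filter (fun p => p.2 ≤ m), g⟩ :=
  valid_mk_subset hv (Finset.filter_subset _ _)
    (fun p hp => (Finset.mem_filter.mp hp).2) hgc

lemma nested_left {σ : Struct} (hn : σ.Nested) {m : ℕ} {g : Option ℕ} :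
    Struct.Nested ⟨m, σ.pairs.filter (fun p => p.2 ≤ m), g⟩ :=
  nested_mk_subset hn (Finset.filter_subset _ _)

lemma valid_right {σ : Struct} (hv : σ.Valid) {m : ℕ} {g : Option ℕ}
    (hgc : ∀ x ∈ g, x ≤ σ.n - m) :
    Struct.Valid ⟨σ.n - m,
      (σ.pairs.filter (fun p => m < p.1)).image (fun p => (p.1 - m, p.2 - m)), g⟩ :=
  valid_mk_image hv (Finset.filter_subset _ _)
    (fun p hp => (Finset.mem_filter.mp hp).2)
    (fun p hp => by
      have := hv.1 p (Finset.mem_filter.mp hp).1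
      have := (Finset.mem_filter.mp hp).2
      omega) hgc

lemma nested_right {σ : Struct} (hv : σ.Valid) (hn : σ.Nested) {m n' : ℕ} {g : Option ℕ} :
    Struct.Nested ⟨n',
      (σ.pairs.filter (fun p => m < p.1)).image (fun p => (p.1 - m, p.2 - m)), g⟩ :=
  nested_mk_image hv hn (Finset.filter_subset _ _)
    (fun p hp => (Finset.mem_filter.mp hp).2)

/-- Termination measure. -/
def mu (σ : Struct) : ℕ :=
  4 * σ.n + (match σ.gap with
    | none => 1
    | some k => if ∃ p ∈ σ.pairs, p.1 ≤ k ∧ k < p.2 then 0 else 2)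

lemma mu_none {σ : Struct} (h : σ.gap = none) : mu σ = 4 * σ.n + 1 := by
  simp [mu, h]

lemma mu_straddle {σ : Struct} {k : ℕ} (h : σ.gap = some k)
    (hs : ∃ p ∈ σ.pairs, p.1 ≤ k ∧ k < p.2) : mu σ = 4 * σ.n := by
  simp [mu, h, hs]

lemma mu_nostraddle {σ : Struct} {k : ℕ} (h : σ.gap = some k)
    (hs : ¬ ∃ p ∈ σ.pairs, p.1 ≤ k ∧ k < p.2) : mu σ = 4 * σ.n + 2 := by
  simp [mu, h, hs]

lemma mu_le (σ : Struct) : mu σ ≤ 4 * σ.n + 2 := by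
  rcases h : σ.gap with _ | k
  · rw [mu_none h]; omega
  · by_cases hs : ∃ p ∈ σ.pairs, p.1 ≤ k ∧ k < p.2
    · rw [mu_straddle h hs]; omega
    · rw [mu_nostraddle h hs]

lemma mu_ge (σ : Struct) : 4 * σ.n ≤ mu σ := by
  rcases h : σ.gap with _ | k
  · rw [mu_none h]; omega
  · by_cases hs : ∃ p ∈ σ.pairs, p.1 ≤ k ∧ k < p.2
    · rw [mu_straddle h hs]
    · rw [mu_nostraddle h hs]; omega

/-- Every nested structure with at least one base is
𝒢-decomposable. -/
theorem nested_decomposable (σ : Struct) (hv : σ.Valid) (hne : 1 ≤ σ.n)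
    (hnested : σ.Nested) : Decomposable calG σ := by
  suffices H : ∀ N τ, mu τ ≤ N → τ.Valid → 1 ≤ τ.n → τ.Nested → Decomposable calG τ by
    exact H (mu σ) σ le_rfl hv hne hnested
  intro N
  induction N with
  | zero =>
    intro τ hmu _ h1 _
    have := mu_ge τ
    omega
  | succ N ih =>
    intro σ hmu hv h1 hnest
    rcases hgap : σ.gap with _ | k
    · -- 0-structure
      have hmu0 : 4 * σ.n + 1 ≤ N + 1 := by rw [← mu_none hgap]; exact hmu
      by_cases hn1 : σ.n = 1
      · have hP : σ.pairs = ∅ := by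
          apply Finset.eq_empty_of_forall_notMem
          intro p hp
          have := hv.1 p hp
          omega
        have hid : σ = ident0 :=
          Struct.ext' (by rw [hn1]; rfl) (by rw [hP]; rfl) (by rw [hgap]; rfl)
        rw [hid]; exact Decomposable.isId0
      · by_cases hp1 : ∃ p ∈ σ.pairs, p.1 = 1
        · obtain ⟨p0, hp0, hx⟩ := hp1
          have hb0 := hv.1 p0 hp0
          by_cases hjn : p0.2 = σ.n
          · -- loop case
            have hpm : (1, σ.n) ∈ σ.pairs := by
              have hp0e : p0 = (1, σ.n) := by
                rcases p0 with ⟨x, y⟩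
                simp only [Prod.mk.injEq]
                exact ⟨hx, hjn⟩
              rwa [hp0e] at hp0
            apply dec_loop hv hgap (by omega)
            refine ih _ ?_ ?_ h1 (nested_mk_subset hnest (Finset.Subset.refl _))
            · rw [mu_straddle (σ := ⟨σ.n, σ.pairs, some 1⟩) (k := 1) rfl
                ⟨(1, σ.n), hpm, le_rfl, by omega⟩]
              show 4 * σ.n ≤ N; omega
            · exact valid_mk_subset hv (Finset.Subset.refl _) (fun p hp => (hv.1 p hp).2.2)
                (by intro x hx2
                    simp only [Option.mem_def, Option.some.injEq] at hx2
                    omega)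
          · -- split at p0.2
            have hm2 : p0.2 < σ.n := by omega
            have hcr : ¬ ∃ q ∈ σ.pairs, q.1 ≤ p0.2 ∧ p0.2 < q.2 := by
              rintro ⟨q, hq, hq1, hq2⟩
              have hne' : q ≠ p0 := by intro h; rw [h] at hq2; omega
              have hd := hv.2.1 q hq p0 hp0 hne'
              have hbq := hv.1 q hq
              have hq1' : 1 < q.1 := by
                rcases Nat.lt_or_ge 1 q.1 with h | h
                · exact h
                · exfalso
                  have hq1e : q.1 = 1 := by omega
                  exact hd.1 (by rw [hq1e, hx])
              have hq1'' : q.1 < p0.2 := by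
                have := hd.2.1
                omega
              exact hnest ⟨p0, hp0, q, hq, by omega, by omega, by omega⟩
            apply dec_split0 hv hgap (by omega) hm2 hcr
            · refine ih _ ?_ (valid_left hv (by intro x hx2; simp at hx2))
                (by show 1 ≤ p0.2; omega) (nested_left hnest)
              rw [mu_none rfl]
              show 4 * p0.2 + 1 ≤ N; omega
            · refine ih _ ?_ (valid_right hv (by intro x hx2; simp at hx2))
                (by show 1 ≤ σ.n - p0.2; omega) (nested_right hv hnest)
              rw [mu_none rfl]
              show 4 * (σ.n - p0.2) + 1 ≤ N; omega
        · -- base 1 unpaired, split at 1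
          have hcr : ¬ ∃ q ∈ σ.pairs, q.1 ≤ 1 ∧ 1 < q.2 := by
            rintro ⟨q, hq, hq1, hq2⟩
            have hbq := hv.1 q hq
            exact hp1 ⟨q, hq, by omega⟩
          apply dec_split0 hv hgap le_rfl (by omega) hcr
          · refine ih _ ?_ (valid_left hv (by intro x hx2; simp at hx2))
              (by show 1 ≤ 1; omega) (nested_left hnest)
            rw [mu_none rfl]
            show 4 * 1 + 1 ≤ N; omega
          · refine ih _ ?_ (valid_right hv (by intro x hx2; simp at hx2))
              (by show 1 ≤ σ.n - 1; omega) (nested_right hv hnest)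
            rw [mu_none rfl]
            show 4 * (σ.n - 1) + 1 ≤ N; omega
    · -- 1-structure with gap k
      have hkn : k ≤ σ.n := hv.2.2 k (by rw [hgap]; rfl)
      by_cases hstr : ∃ p ∈ σ.pairs, p.1 ≤ k ∧ k < p.2
      · -- there is a straddling pair; take one with minimal first coordinate
        have hmu0 : 4 * σ.n ≤ N + 1 := by rw [← mu_straddle hgap hstr]; exact hmu
        obtain ⟨p, hpm', hps⟩ := hstr
        have hSne : (σ.pairs.filter (fun p => p.1 ≤ k ∧ k < p.2)).Nonempty :=
          ⟨p, Finset.mem_filter.mpr ⟨hpm', hps⟩⟩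
        obtain ⟨p0, hp0S, hmin⟩ :=
          Finset.exists_min_image (σ.pairs.filter (fun p => p.1 ≤ k ∧ k < p.2)) Prod.fst hSne
        have hp0 : p0 ∈ σ.pairs := (Finset.mem_filter.mp hp0S).1
        have hp0s : p0.1 ≤ k ∧ k < p0.2 := (Finset.mem_filter.mp hp0S).2
        have hb0 := hv.1 p0 hp0
        by_cases hi2 : 2 ≤ p0.1
        · -- peel left part with lconcat, m = p0.1 - 1
          have hcr : ¬ ∃ q ∈ σ.pairs, q.1 ≤ p0.1 - 1 ∧ p0.1 - 1 < q.2 := by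
            rintro ⟨q, hq, hq1, hq2⟩
            have hbq := hv.1 q hq
            by_cases hq2k : k < q.2
            · have hqS : q ∈ σ.pairs.filter (fun p => p.1 ≤ k ∧ k < p.2) :=
                Finset.mem_filter.mpr ⟨hq, by omega, hq2k⟩
              have := hmin q hqS
              omega
            · have hne' : q ≠ p0 := by intro h; rw [h] at hq2k; omega
              have hd := hv.2.1 q hq p0 hp0 hne'
              have hd2 : q.2 ≠ p0.1 := hd.2.2.1
              exact hnest ⟨q, hq, p0, hp0, by omega, by omega, by omega⟩
          apply dec_split1l hv hgap (by omega) (by omega) (by omega) hkn hcr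
          · refine ih _ ?_ (valid_left hv (by intro x hx2; simp at hx2))
              (by show 1 ≤ p0.1 - 1; omega) (nested_left hnest)
            have := mu_le ⟨p0.1 - 1, σ.pairs.filter (fun p => p.2 ≤ p0.1 - 1), none⟩
            rw [mu_none rfl]
            show 4 * (p0.1 - 1) + 1 ≤ N; omega
          · refine ih _ ?_
              (valid_right hv (by
                intro x hx2
                simp only [Option.mem_def, Option.some.injEq] at hx2
                omega))
              (by show 1 ≤ σ.n - (p0.1 - 1); omega) (nested_right hv hnest)
            have := mu_le ⟨σ.n - (p0.1 - 1),
              (σ.pairs.filter (fun p => p0.1 - 1 < p.1)).image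
                (fun p => (p.1 - (p0.1 - 1), p.2 - (p0.1 - 1))), some (k - (p0.1 - 1))⟩
            have h2 : (⟨σ.n - (p0.1 - 1),
              (σ.pairs.filter (fun p => p0.1 - 1 < p.1)).image
                (fun p => (p.1 - (p0.1 - 1), p.2 - (p0.1 - 1))), some (k - (p0.1 - 1))⟩ :
                  Struct).n = σ.n - (p0.1 - 1) := rfl
            omega
        · -- p0.1 = 1
          have hi1 : p0.1 = 1 := by omega
          by_cases hjn : p0.2 = σ.n
          · -- p0 = (1, n)
            have hpm : (1, σ.n) ∈ σ.pairs := by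
              have hp0e : p0 = (1, σ.n) := by
                rcases p0 with ⟨x, y⟩
                simp only [Prod.mk.injEq]
                exact ⟨hi1, hjn⟩
              rwa [hp0e] at hp0
            by_cases hn2 : σ.n = 2
            · -- σ = ident1
              have hP : σ.pairs = {(1, 2)} := by
                ext q
                simp only [Finset.mem_singleton]
                constructor
                · intro hq
                  have := hv.1 q hq
                  rcases q with ⟨x, y⟩
                  simp only [Prod.mk.injEq]
                  constructor <;> dsimp only at this <;> omega
                · rintro rfl
                  rw [hn2] at hpm
                  exact hpm
              have hk1 : k = 1 := by omega
              have hid : σ = ident1 :=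
                Struct.ext' (by rw [hn2]; rfl) (by rw [hP]; rfl)
                  (by rw [hgap, hk1]; rfl)
              rw [hid]; exact Decomposable.isId1
            · -- nest
              have hn3 : 3 ≤ σ.n := by omega
              apply dec_nest hv hgap hpm (by omega) (by omega) hn3
              have hbnd := erase_bounds hv hpm
              refine ih _ ?_ ?_ (by show 1 ≤ σ.n - 2; omega) ?_
              · have := mu_le ⟨σ.n - 2,
                  (σ.pairs.erase (1, σ.n)).image (fun p => (p.1 - 1, p.2 - 1)),
                  some (k - 1)⟩
                have h2 : (⟨σ.n - 2,
                  (σ.pairs.erase (1, σ.n)).image (fun p => (p.1 - 1, p.2 - 1)),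
                  some (k - 1)⟩ : Struct).n = σ.n - 2 := rfl
                omega
              · refine valid_mk_image hv (Finset.erase_subset _ _)
                  (fun q hq => (hbnd q hq).1)
                  (fun q hq => by have := (hbnd q hq).2; omega)
                  (by intro x hx2
                      simp only [Option.mem_def, Option.some.injEq] at hx2
                      omega)
              · exact nested_mk_image hv hnest (Finset.erase_subset _ _)
                  (fun q hq => (hbnd q hq).1)
          · -- p0 = (1, j), j < n : peel right part with rconcat, m = p0.2
            have hm2 : p0.2 < σ.n := by omega
            have hcr : ¬ ∃ q ∈ σ.pairs, q.1 ≤ p0.2 ∧ p0.2 < q.2 := by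
              rintro ⟨q, hq, hq1, hq2⟩
              have hne' : q ≠ p0 := by intro h; rw [h] at hq2; omega
              have hd := hv.2.1 q hq p0 hp0 hne'
              have hbq := hv.1 q hq
              have hq1' : 1 < q.1 := by
                rcases Nat.lt_or_ge 1 q.1 with h | h
                · exact h
                · exfalso
                  have hq1e : q.1 = 1 := by omega
                  exact hd.1 (by rw [hq1e, hi1])
              have hq1'' : q.1 < p0.2 := by
                have := hd.2.1
                omega
              exact hnest ⟨p0, hp0, q, hq, by omega, by omega, by omega⟩
            apply dec_split1r hv hgap (by omega) hm2 (by omega) hcr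
            · refine ih _ ?_
                (valid_left hv (by
                  intro x hx2
                  simp only [Option.mem_def, Option.some.injEq] at hx2
                  omega))
                (by show 1 ≤ p0.2; omega) (nested_left hnest)
              have := mu_le ⟨p0.2, σ.pairs.filter (fun p => p.2 ≤ p0.2), some k⟩
              have h2 : (⟨p0.2, σ.pairs.filter (fun p => p.2 ≤ p0.2), some k⟩ : Struct).n
                  = p0.2 := rfl
              omega
            · refine ih _ ?_ (valid_right hv (by intro x hx2; simp at hx2))
                (by show 1 ≤ σ.n - p0.2; omega) (nested_right hv hnest)
              rw [mu_none rfl]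
              show 4 * (σ.n - p0.2) + 1 ≤ N; omega
      · -- no straddling pair
        have hmu0 : 4 * σ.n + 2 ≤ N + 1 := by rw [← mu_nostraddle hgap hstr]; exact hmu
        by_cases hk0 : k = 0
        · apply dec_rembed (by rw [hgap, hk0])
          refine ih _ ?_
            (valid_mk_subset hv (Finset.Subset.refl _) (fun p hp => (hv.1 p hp).2.2)
              (by intro x hx2; simp at hx2))
            h1 (nested_mk_subset hnest (Finset.Subset.refl _))
          rw [mu_none rfl]
          show 4 * σ.n + 1 ≤ N; omega
        · by_cases hkn' : k = σ.n
          · apply dec_lembed (by rw [hgap, hkn'])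
            refine ih _ ?_
              (valid_mk_subset hv (Finset.Subset.refl _) (fun p hp => (hv.1 p hp).2.2)
                (by intro x hx2; simp at hx2))
              h1 (nested_mk_subset hnest (Finset.Subset.refl _))
            rw [mu_none rfl]
            show 4 * σ.n + 1 ≤ N; omega
          · -- 1 ≤ k < n : split at k with lconcat
            apply dec_split1l hv hgap (by omega) (by omega) le_rfl hkn hstr
            · refine ih _ ?_ (valid_left hv (by intro x hx2; simp at hx2))
                (by show 1 ≤ k; omega) (nested_left hnest)
              rw [mu_none rfl]
              show 4 * k + 1 ≤ N; omega
            · refine ih _ ?_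
                (valid_right hv (by
                  intro x hx2
                  simp only [Option.mem_def, Option.some.injEq] at hx2
                  omega))
                (by show 1 ≤ σ.n - k; omega) (nested_right hv hnest)
              have := mu_le ⟨σ.n - k,
                (σ.pairs.filter (fun p => k < p.1)).image (fun p => (p.1 - k, p.2 - k)),
                some (k - k)⟩
              have h2 : (⟨σ.n - k,
                (σ.pairs.filter (fun p => k < p.1)).image (fun p => (p.1 - k, p.2 - k)),
                some (k - k)⟩ : Struct).n = σ.n - k := rfl
              omega

end RNA
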